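/- Let a < b be real numbers and let f : ℝ → ℝ be continuous with f(a) < 0 and f(b) > 0. If x : ℝ → ℝ is differentiable with x'(t) = f(x(t)) for all t ∈ ℝ and x(0) ∈ [a,b], then x(t) ∈ [a,b] for all t ≤ 0. -/
import Mathlib

/-- If `x u ≥ x s` on a left neighborhood `(t,s)` of `s`, the derivative at `s` is `≤ 0`. -/
lemma deriv_nonpos_of_left_min (x : ℝ → ℝ) (d s t : ℝ) (hts : t < s)
    (hd : HasDerivAt x d s) (h : ∀ u ∈ Set.Ioo t s, x s ≤ x u) : d ≤ 0 := by
  have htend : Filter.Tendsto (slope x s) (nhdsWithin s (Set.Iio s)) (nhds d) :=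
    (hasDerivAt_iff_tendsto_slope.mp hd).mono_left
      (nhdsWithin_mono s (by intro u hu; exact ne_of_lt hu))
  refine le_of_tendsto htend ?_
  filter_upwards [Ioo_mem_nhdsLT_of_mem ⟨hts, le_refl s⟩] with u hu
  have h1 : 0 ≤ x u - x s := sub_nonneg.2 (h u hu)
  have h2 : u - s < 0 := sub_neg.2 hu.2
  simpa [slope, div_eq_inv_mul] using div_nonpos_of_nonneg_of_nonpos h1 h2.le

/-- If `x u ≤ x s` on a left neighborhood `(t,s)` of `s`, the derivative at `s` is `≥ 0`. -/
lemma deriv_nonneg_of_left_max (x : ℝ → ℝ) (d s t : ℝ) (hts : t < s)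
    (hd : HasDerivAt x d s) (h : ∀ u ∈ Set.Ioo t s, x u ≤ x s) : 0 ≤ d := by
  have := deriv_nonpos_of_left_min (fun u => -(x u)) (-d) s t hts hd.neg
    (fun u hu => neg_le_neg (h u hu))
  linarith

/-- Backward invariance: if `f a < 0` and `f b > 0`, global solutions of
`ẋ = f(x)` starting in `[a,b]` remain in `[a,b]` for all negative times. -/
theorem stmt_3 (a b : ℝ) (hab : a < b) (f : ℝ → ℝ) (hf : Continuous f)
    (hfa : f a < 0) (hfb : 0 < f b) (x : ℝ → ℝ)
    (hode : ∀ t : ℝ, HasDerivAt x (f (x t)) t)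
    (h0 : x 0 ∈ Set.Icc a b) :
    ∀ t ≤ (0 : ℝ), x t ∈ Set.Icc a b := by
  have hxc : Continuous x := by
    refine continuous_iff_continuousAt.2 fun u => (hode u).continuousAt
  intro t ht
  by_contra hcon
  have ht0 : t < 0 := by
    rcases lt_or_eq_of_le ht with h | h
    · exact h
    · exact absurd (h ▸ h0) hcon
  rcases not_and_or.mp (by simpa [Set.mem_Icc, not_and_or] using hcon : ¬ (a ≤ x t ∧ x t ≤ b))
    with hlt | hgt
  · -- x t < a
    push_neg at hlt
    set S : Set ℝ := {u | u ∈ Set.Icc t 0 ∧ a ≤ x u} with hS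
    have hSne : S.Nonempty := ⟨0, ⟨ht, le_refl 0⟩, h0.1⟩
    have hSbdd : BddBelow S := ⟨t, fun u hu => hu.1.1⟩
    have hScl : IsClosed S := (isClosed_Icc).inter (isClosed_le continuous_const hxc)
    have hsmem : sInf S ∈ S := hScl.csInf_mem hSne hSbdd
    set s := sInf S with hs
    have hts : t < s := by
      rcases lt_or_eq_of_le (hsmem.1.1) with h | h
      · exact h
      · exfalso; rw [← h] at hsmem; linarith [hsmem.2]
    have hlow : ∀ u ∈ Set.Ioo t s, x u < a := by
      intro u hu
      by_contra hge
      push_neg at hge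
      have : u ∈ S := ⟨⟨hu.1.le, hu.2.le.trans hsmem.1.2⟩, hge⟩
      exact absurd (csInf_le hSbdd this) (not_le.2 hu.2)
    have hxs : x s = a := by
      refine le_antisymm ?_ hsmem.2
      have : Filter.Tendsto x (nhdsWithin s (Set.Iio s)) (nhds (x s)) :=
        (hxc.tendsto s).mono_left nhdsWithin_le_nhds
      refine le_of_tendsto this ?_
      filter_upwards [Ioo_mem_nhdsLT_of_mem ⟨hts, le_refl s⟩] with u hu
      exact (hlow u hu).le
    have := deriv_nonneg_of_left_max x (f (x s)) s t hts (hode s)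
      (fun u hu => (hlow u hu).le.trans hxs.ge)
    rw [hxs] at this
    linarith
  · -- b < x t
    push_neg at hgt
    set S : Set ℝ := {u | u ∈ Set.Icc t 0 ∧ x u ≤ b} with hS
    have hSne : S.Nonempty := ⟨0, ⟨ht, le_refl 0⟩, h0.2⟩
    have hSbdd : BddBelow S := ⟨t, fun u hu => hu.1.1⟩
    have hScl : IsClosed S := (isClosed_Icc).inter (isClosed_le hxc continuous_const)
    have hsmem : sInf S ∈ S := hScl.csInf_mem hSne hSbdd
    set s := sInf S with hs
    have hts : t < s := by
      rcases lt_or_eq_of_le (hsmem.1.1) with h | h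
      · exact h
      · exfalso; rw [← h] at hsmem; linarith [hsmem.2]
    have hhigh : ∀ u ∈ Set.Ioo t s, b < x u := by
      intro u hu
      by_contra hge
      push_neg at hge
      have : u ∈ S := ⟨⟨hu.1.le, hu.2.le.trans hsmem.1.2⟩, hge⟩
      exact absurd (csInf_le hSbdd this) (not_le.2 hu.2)
    have hxs : x s = b := by
      refine le_antisymm hsmem.2 ?_
      have : Filter.Tendsto x (nhdsWithin s (Set.Iio s)) (nhds (x s)) :=
        (hxc.tendsto s).mono_left nhdsWithin_le_nhds
      refine ge_of_tendsto this ?_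
      filter_upwards [Ioo_mem_nhdsLT_of_mem ⟨hts, le_refl s⟩] with u hu
      exact (hhigh u hu).le
    have := deriv_nonpos_of_left_min x (f (x s)) s t hts (hode s)
      (fun u hu => hxs.le.trans (hhigh u hu).le)
    rw [hxs] at this
    linarith
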